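/- Let $f \in \mathbb{C}[[x,y]]$ have order $m$ (i.e., $f \in \mathfrak{m}^m \setminus \mathfrak{m}^{m+1}$ where $\mathfrak{m} = \langle x, y \rangle$), let $a, b \in \mathbb{C}[[x,y]]$ and $h \in \mathfrak{m}^m$. Then in the dual numbers $\mathbb{C}[[x,y]][\varepsilon]/(\varepsilon^2)$ we have $f + \varepsilon(a \cdot \partial f/\partial x + b \cdot \partial f/\partial y + h) = f(x_a, y_b) + \varepsilon \cdot h(x_a, y_b)$, where $x_a = x + \varepsilon a$, $y_b = y + \varepsilon b$; in particular this element lies in the ideal $\langle x_a, y_b \rangle^m$ of $\mathbb{C}[[x,y]][\varepsilon]/(\varepsilon^2)$. -/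

import Mathlib

set_option synthInstance.maxHeartbeats 1000000
set_option maxHeartbeats 2000000

open MvPowerSeries TrivSqZeroExt DualNumber

noncomputable section

abbrev R2 := MvPowerSeries (Fin 2) ℂ

def Mxy : Ideal R2 := Ideal.span {MvPowerSeries.X 0, MvPowerSeries.X 1}

/-- Formal partial derivative of a power series in two variables. -/
def pd (i : Fin 2) (f : R2) : R2 :=
  fun d => (d i + 1 : ℂ) * MvPowerSeries.coeff (d + Finsupp.single i 1) f

/-- The element `x + ε a` of the dual numbers over `ℂ[[x,y]]`. -/
def Xa (a : R2) : DualNumber R2 := inl (MvPowerSeries.X 0) + eps * inl a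

/-- The element `y + ε b` of the dual numbers over `ℂ[[x,y]]`. -/
def Yb (b : R2) : DualNumber R2 := inl (MvPowerSeries.X 1) + eps * inl b

/-- The `n`-th term of the expansion of `f (x + ε a, y + ε b)`. -/
def termD (a b f : R2) (n : Fin 2 →₀ ℕ) : DualNumber R2 :=
  inl (MvPowerSeries.C (σ := Fin 2) (R := ℂ) (MvPowerSeries.coeff n f)) *
    (Xa a ^ (n 0) * Yb b ^ (n 1))

/-- Substitution `f (x + ε a, y + ε b)`, defined coefficientwise: each coefficient of
each component only receives contributions from finitely many terms of the expansion. -/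
def substDual (a b f : R2) : DualNumber R2 :=
  TrivSqZeroExt.inl (R := R2) (M := R2) ((fun d => MvPowerSeries.coeff d
        (fst (∑ n ∈ Finset.Iic (d + Finsupp.single 0 1 + Finsupp.single 1 1),
          termD a b f n)) : R2)) +
  TrivSqZeroExt.inr (R := R2) (M := R2) ((fun d => MvPowerSeries.coeff d
        (snd (∑ n ∈ Finset.Iic (d + Finsupp.single 0 1 + Finsupp.single 1 1),
          termD a b f n)) : R2))


lemma coeff_pd (i : Fin 2) (f : R2) (d : Fin 2 →₀ ℕ) :
    MvPowerSeries.coeff d (pd i f) = ((d i : ℂ) + 1) * MvPowerSeries.coeff (d + Finsupp.single i 1) f := rfl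

lemma pd_add (i : Fin 2) (f g : R2) : pd i (f + g) = pd i f + pd i g := by
  ext d
  simp only [map_add, coeff_pd]
  ring

lemma pd_C (i : Fin 2) (c : ℂ) : pd i (MvPowerSeries.C (σ := Fin 2) (R := ℂ) c) = 0 := by
  ext d
  rw [coeff_pd, map_zero, MvPowerSeries.coeff_C, if_neg, mul_zero]
  intro hd
  have := DFunLike.congr_fun hd i
  simp [Finsupp.single_apply] at this

lemma pd_X_same (i : Fin 2) : pd i (MvPowerSeries.X i) = 1 := by
  ext d
  rw [coeff_pd]
  classical
  rw [MvPowerSeries.coeff_X, MvPowerSeries.coeff_one]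
  by_cases hd : d = 0
  · subst hd; simp
  · rw [if_neg, if_neg hd, mul_zero]
    intro hc
    exact hd (by simpa using hc)

lemma pd_X_ne (i j : Fin 2) (hij : j ≠ i) : pd i (MvPowerSeries.X j) = 0 := by
  ext d
  rw [coeff_pd, map_zero]
  classical
  rw [MvPowerSeries.coeff_X, if_neg, mul_zero]
  intro hc
  have h2 := DFunLike.congr_fun hc i
  rw [Finsupp.add_apply, Finsupp.single_eq_same, Finsupp.single_eq_of_ne hij.symm] at h2
  omega

lemma shift_sum (i : Fin 2) (d : Fin 2 →₀ ℕ) (F : (Fin 2 →₀ ℕ) → (Fin 2 →₀ ℕ) → ℂ) :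
    ∑ p ∈ Finset.HasAntidiagonal.antidiagonal (d + Finsupp.single i 1 : Fin 2 →₀ ℕ), (p.1 i : ℂ) * F p.1 p.2
      = ∑ p ∈ Finset.HasAntidiagonal.antidiagonal d,
          (((p : (Fin 2 →₀ ℕ) × (Fin 2 →₀ ℕ)).1 i : ℂ) + 1) * F (p.1 + Finsupp.single i 1) p.2 := by
  classical
  set e := Finsupp.single i 1 with he
  have hsub : (Finset.HasAntidiagonal.antidiagonal d).image (fun p : (Fin 2 →₀ ℕ) × (Fin 2 →₀ ℕ) => (p.1 + e, p.2))
      ⊆ Finset.HasAntidiagonal.antidiagonal (d + e) := by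
    intro p hp
    simp only [Finset.mem_image, Finset.HasAntidiagonal.mem_antidiagonal] at hp ⊢
    obtain ⟨q, hq, rfl⟩ := hp
    simp only
    rw [add_right_comm, hq]
  rw [← Finset.sum_subset hsub, Finset.sum_image]
  · apply Finset.sum_congr rfl
    intro p hp
    have : (p.1 + e) i = p.1 i + 1 := by simp [he, Finsupp.single_apply]
    rw [this]
    push_cast
    ring
  · intro p hp q hq hpq
    have h1 := congrArg Prod.fst hpq
    have h2 := congrArg Prod.snd hpq
    simp only at h1 h2
    exact Prod.ext (add_right_cancel h1) h2
  · intro p hp hnp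
    by_cases hz : p.1 i = 0
    · simp [hz]
    · exfalso
      apply hnp
      have hle : e ≤ p.1 := by
        rw [he, Finsupp.single_le_iff]
        omega
      refine Finset.mem_image.2 ⟨(p.1 - e, p.2), ?_, ?_⟩
      · rw [Finset.HasAntidiagonal.mem_antidiagonal]
        have hp' := Finset.HasAntidiagonal.mem_antidiagonal.1 hp
        ext j
        have h1 := DFunLike.congr_fun hp' j
        have h2 : e j ≤ p.1 j := hle j
        simp only [Finsupp.add_apply, Finsupp.tsub_apply, Finsupp.coe_add, Pi.add_apply] at h1 ⊢
        omega
      · simp only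
        rw [tsub_add_cancel_of_le hle]

lemma pd_mul (i : Fin 2) (f g : R2) : pd i (f * g) = pd i f * g + f * pd i g := by
  classical
  ext d
  set e := Finsupp.single i 1 with he
  rw [map_add, coeff_pd, MvPowerSeries.coeff_mul, MvPowerSeries.coeff_mul, MvPowerSeries.coeff_mul,
    Finset.mul_sum]
  have key : ∀ p ∈ Finset.HasAntidiagonal.antidiagonal (d + e),
      ((d i : ℂ) + 1) * (MvPowerSeries.coeff p.1 f * MvPowerSeries.coeff p.2 g)
        = (p.1 i : ℂ) * (MvPowerSeries.coeff p.1 f * MvPowerSeries.coeff p.2 g)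
          + (p.2 i : ℂ) * (MvPowerSeries.coeff p.1 f * MvPowerSeries.coeff p.2 g) := by
    intro p hp
    have hp' := DFunLike.congr_fun (Finset.HasAntidiagonal.mem_antidiagonal.1 hp) i
    simp only [Finsupp.add_apply, Finsupp.coe_add, Pi.add_apply] at hp'
    have : p.1 i + p.2 i = d i + 1 := by simpa [he, Finsupp.single_apply] using hp'
    have hc : (p.1 i : ℂ) + (p.2 i : ℂ) = (d i : ℂ) + 1 := by exact_mod_cast congrArg Nat.cast this
    rw [← hc]; ring
  have hswap : ∀ (d' : Fin 2 →₀ ℕ) (F : (Fin 2 →₀ ℕ) × (Fin 2 →₀ ℕ) → ℂ),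
      ∑ p ∈ Finset.HasAntidiagonal.antidiagonal d', F p = ∑ p ∈ Finset.HasAntidiagonal.antidiagonal d', F (p.2, p.1) := by
    intro d' F
    conv_rhs => rw [← Finset.HasAntidiagonal.map_swap_antidiagonal (n := d'), Finset.sum_map]
    simp
  rw [Finset.sum_congr rfl key, Finset.sum_add_distrib]
  congr 1
  · refine (shift_sum i d (fun u v => MvPowerSeries.coeff u f * MvPowerSeries.coeff v g)).trans ?_
    apply Finset.sum_congr rfl
    intro p _
    rw [coeff_pd]
    ring
  · refine (hswap (d + e) (fun p => (p.2 i : ℂ) *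
      (MvPowerSeries.coeff p.1 f * MvPowerSeries.coeff p.2 g))).trans ?_
    refine (shift_sum i d (fun u v => MvPowerSeries.coeff v f * MvPowerSeries.coeff u g)).trans ?_
    refine (hswap d (fun p => ((p.1 i : ℂ) + 1) *
      (MvPowerSeries.coeff p.2 f * MvPowerSeries.coeff (p.1 + e) g))).trans ?_
    apply Finset.sum_congr rfl
    intro p _
    rw [coeff_pd]
    ring

lemma pd_one (i : Fin 2) : pd i (1 : R2) = 0 := by
  simpa using pd_C i 1

lemma eps_mul_inl (r : R2) : (eps * inl r : DualNumber R2) = inr r := by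
  rw [show (eps : DualNumber R2) = inr 1 from rfl, inr_mul_inl]; simp

def phi (a b : R2) : R2 →+* DualNumber R2 where
  toFun g := inl g + inr (a * pd 0 g + b * pd 1 g)
  map_one' := by rw [pd_one, pd_one]; simp
  map_zero' := by
    have : pd 0 (0 : R2) = 0 := by simpa using pd_C 0 0
    have h1 : pd 1 (0 : R2) = 0 := by simpa using pd_C 1 0
    rw [this, h1]; simp
  map_add' := fun g h => by
    rw [pd_add, pd_add, inl_add]
    rw [show a * (pd 0 g + pd 0 h) + b * (pd 1 g + pd 1 h)
      = (a * pd 0 g + b * pd 1 g) + (a * pd 0 h + b * pd 1 h) by ring, inr_add]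
    abel
  map_mul' := fun g h => by
    rw [mul_add, add_mul, add_mul, inl_mul_inl, inr_mul_inr]
    rw [inl_mul_inr, inr_mul_inl, pd_mul, pd_mul]
    rw [show g • (a * pd 0 h + b * pd 1 h) = g * (a * pd 0 h + b * pd 1 h) from rfl]
    rw [show MulOpposite.op (h : R2) • (a * pd 0 g + b * pd 1 g)
      = (a * pd 0 g + b * pd 1 g) * h from rfl]
    rw [show a * (pd 0 g * h + g * pd 0 h) + b * (pd 1 g * h + g * pd 1 h)
      = g * (a * pd 0 h + b * pd 1 h) + (a * pd 0 g + b * pd 1 g) * h by ring, inr_add]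
    abel

lemma phi_apply (a b g : R2) : phi a b g = inl g + inr (a * pd 0 g + b * pd 1 g) := rfl
lemma fst_phi (a b g : R2) : fst (phi a b g) = g := by simp [phi_apply]
lemma snd_phi (a b g : R2) : snd (phi a b g) = a * pd 0 g + b * pd 1 g := by simp [phi_apply]

lemma phi_X0 (a b : R2) : phi a b (MvPowerSeries.X 0) = Xa a := by
  rw [phi_apply, pd_X_same, pd_X_ne 1 0 (by decide), Xa, eps_mul_inl]
  simp

lemma phi_X1 (a b : R2) : phi a b (MvPowerSeries.X 1) = Yb b := by
  rw [phi_apply, pd_X_same, pd_X_ne 0 1 (by decide), Yb, eps_mul_inl]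
  simp

lemma phi_C (a b : R2) (c : ℂ) : phi a b (MvPowerSeries.C (σ := Fin 2) (R := ℂ) c) = inl (MvPowerSeries.C (σ := Fin 2) (R := ℂ) c) := by
  rw [phi_apply, pd_C, pd_C]
  simp

lemma monomial_decomp (n : Fin 2 →₀ ℕ) (c : ℂ) :
    MvPowerSeries.monomial n c
      = MvPowerSeries.C (σ := Fin 2) (R := ℂ) c * MvPowerSeries.X 0 ^ (n 0) * MvPowerSeries.X 1 ^ (n 1) := by
  rw [MvPowerSeries.X_pow_eq, MvPowerSeries.X_pow_eq,
    show (MvPowerSeries.C (σ := Fin 2) (R := ℂ) c : R2) = MvPowerSeries.monomial 0 c from rfl,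
    MvPowerSeries.monomial_mul_monomial, MvPowerSeries.monomial_mul_monomial]
  have hn : ((0 : Fin 2 →₀ ℕ) + Finsupp.single 0 (n 0) + Finsupp.single (1 : Fin 2) (n 1)) = n := by
    ext j
    fin_cases j <;> simp [Finsupp.single_apply]
  rw [hn, mul_one, mul_one]

lemma phi_monomial (a b : R2) (n : Fin 2 →₀ ℕ) (c : ℂ) :
    phi a b (MvPowerSeries.monomial n c)
      = inl (MvPowerSeries.C (σ := Fin 2) (R := ℂ) c) * (Xa a ^ (n 0) * Yb b ^ (n 1)) := by
  rw [monomial_decomp, map_mul, map_mul, map_pow, map_pow, phi_C, phi_X0, phi_X1, mul_assoc]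

def truncD (D : Fin 2 →₀ ℕ) (f : R2) : R2 :=
  ∑ n ∈ Finset.Iic D, MvPowerSeries.monomial n (MvPowerSeries.coeff n f)

lemma coeff_truncD (D : Fin 2 →₀ ℕ) (f : R2) (d : Fin 2 →₀ ℕ) (hd : d ≤ D) :
    MvPowerSeries.coeff d (truncD D f) = MvPowerSeries.coeff d f := by
  classical
  rw [truncD, map_sum]
  rw [Finset.sum_congr rfl (fun n _ => MvPowerSeries.coeff_monomial d n _)]
  rw [Finset.sum_ite_eq]
  simp [hd]

lemma sum_termD (a b f : R2) (D : Fin 2 →₀ ℕ) :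
    ∑ n ∈ Finset.Iic D, termD a b f n = phi a b (truncD D f) := by
  rw [truncD, map_sum]
  exact Finset.sum_congr rfl fun n _ => (phi_monomial a b n _).symm

lemma coeff_mul_pd_agree (g f f' : R2) (i : Fin 2) (d D : Fin 2 →₀ ℕ)
    (hD : d + Finsupp.single i 1 ≤ D)
    (hff' : ∀ n ≤ D, MvPowerSeries.coeff n f' = MvPowerSeries.coeff n f) :
    MvPowerSeries.coeff d (g * pd i f') = MvPowerSeries.coeff d (g * pd i f) := by
  classical
  rw [MvPowerSeries.coeff_mul, MvPowerSeries.coeff_mul]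
  apply Finset.sum_congr rfl
  intro p hp
  have hpd := Finset.HasAntidiagonal.mem_antidiagonal.1 hp
  have hv : p.2 ≤ d := hpd ▸ le_add_self
  have hvD : p.2 + Finsupp.single i 1 ≤ D :=
    le_trans (add_le_add_left hv _) hD
  have : MvPowerSeries.coeff p.2 (pd i f') = MvPowerSeries.coeff p.2 (pd i f) := by
    show ((p.2 i : ℂ) + 1) * _ = ((p.2 i : ℂ) + 1) * _
    rw [hff' _ hvD]
  rw [this]

lemma substDual_eq (a b f : R2) : substDual a b f = phi a b f := by
  have key : ∀ d : Fin 2 →₀ ℕ,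
      (∑ n ∈ Finset.Iic (d + Finsupp.single 0 1 + Finsupp.single 1 1), termD a b f n)
        = phi a b (truncD (d + Finsupp.single 0 1 + Finsupp.single 1 1) f) :=
    fun d => sum_termD a b f _
  rw [substDual]
  have h1 : (fun d => MvPowerSeries.coeff d
      (fst (∑ n ∈ Finset.Iic (d + Finsupp.single 0 1 + Finsupp.single 1 1),
        termD a b f n)) : R2) = f := by
    funext d
    rw [key d, fst_phi, coeff_truncD _ _ _ (le_self_add.trans le_self_add)]
    rfl
  have h2 : (fun d => MvPowerSeries.coeff d
      (snd (∑ n ∈ Finset.Iic (d + Finsupp.single 0 1 + Finsupp.single 1 1),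
        termD a b f n)) : R2) = a * pd 0 f + b * pd 1 f := by
    funext d
    rw [key d, snd_phi]
    have e0 : d + Finsupp.single 0 1 ≤ d + Finsupp.single 0 1 + Finsupp.single 1 1 :=
      le_self_add
    have e1 : d + Finsupp.single 1 1 ≤ d + Finsupp.single 0 1 + Finsupp.single 1 1 := by
      rw [add_right_comm]
      exact le_self_add
    have agrees : ∀ n ≤ d + Finsupp.single 0 1 + Finsupp.single 1 1,
        MvPowerSeries.coeff n (truncD (d + Finsupp.single 0 1 + Finsupp.single 1 1) f)
          = MvPowerSeries.coeff n f := fun n hn => coeff_truncD _ _ _ hn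
    have := congrArg₂ (· + ·)
      (coeff_mul_pd_agree a (f := f) (f' := truncD _ f) 0 d _ e0 agrees)
      (coeff_mul_pd_agree b (f := f) (f' := truncD _ f) 1 d _ e1 agrees)
    show MvPowerSeries.coeff d _ = MvPowerSeries.coeff d (a * pd 0 f + b * pd 1 f)
    simpa [map_add] using this
  rw [h1, h2, phi_apply]

lemma eps_mul_inr (m : R2) : (eps * inr m : DualNumber R2) = 0 := by
  rw [show (eps : DualNumber R2) = inr 1 from rfl, inr_mul_inr]


/-- If `ord f = m` and `h ∈ ⟨x,y⟩^m`, then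
`f + ε (a f_x + b f_y + h) = f(x_a, y_b) + ε ⬝ h(x_a, y_b)`, and in particular this
element lies in `⟨x_a, y_b⟩^m` where `x_a = x + ε a`, `y_b = y + ε b`. -/
theorem equimultiple_along_section (m : ℕ) (f a b h : R2)
    (hf : f ∈ Mxy ^ m) (hf' : f ∉ Mxy ^ (m + 1)) (hh : h ∈ Mxy ^ m) :
    (TrivSqZeroExt.inl f + eps * TrivSqZeroExt.inl (a * pd 0 f + b * pd 1 f + h)
        : DualNumber R2)
      = substDual a b f + eps * substDual a b h ∧
    (TrivSqZeroExt.inl f + eps * TrivSqZeroExt.inl (a * pd 0 f + b * pd 1 f + h)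
        : DualNumber R2)
      ∈ Ideal.span {Xa a, Yb b} ^ m := by
  have heq : (TrivSqZeroExt.inl f + eps * TrivSqZeroExt.inl (a * pd 0 f + b * pd 1 f + h)
        : DualNumber R2) = phi a b f + eps * phi a b h := by
    rw [eps_mul_inl, inr_add, phi_apply, phi_apply, mul_add, eps_mul_inl, eps_mul_inr,
      add_zero]
    abel
  have hmem : ∀ g : R2, g ∈ Mxy ^ m → phi a b g ∈ Ideal.span {Xa a, Yb b} ^ m := by
    intro g hg
    have h1 : phi a b g ∈ Ideal.map (phi a b) (Mxy ^ m) := Ideal.mem_map_of_mem _ hg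
    rwa [Ideal.map_pow, Mxy, Ideal.map_span, Set.image_insert_eq, Set.image_singleton,
      phi_X0, phi_X1] at h1
  constructor
  · rw [heq, substDual_eq, substDual_eq]
  · rw [heq]
    exact add_mem (hmem f hf) (Ideal.mul_mem_left _ _ (hmem h hh))

end
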